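/- Let A and B be real symmetric d×d matrices, x and y vectors in ℝ^d with xᵀx − yᵀy = 1, and ω a nonzero real number such that Ax + By = ωx and Bx + Ay = −ωy, and suppose A − B is positive definite. Then f₊ = ((A−B)^{1/2})⁻¹(x + y) satisfies f₊ᵀ f₊ = ω⁻¹; consequently the normalization prefactor α of Casida's auxiliary wavefunction equals 1. -/

import Mathlib

open Matrix

/-- Given the TDDFRT response equations with normalization
`xᵀx − yᵀy = 1`, `ω ≠ 0`, `A − B` positive definite with positive definite square
root `S₂`, the vector `f₊ = S₂⁻¹(x + y)` satisfies `f₊ᵀf₊ = ω⁻¹`; consequently the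
normalization prefactor `α = (ω f₊ᵀf₊)^{-1/2}` of Casida's auxiliary wavefunction
equals `1`. -/
theorem casida_ansatz_normalization (d : ℕ)
    (A B : Matrix (Fin d) (Fin d) ℝ) (x y : Fin d → ℝ) (ω : ℝ)
    (hA : A.IsHermitian) (hB : B.IsHermitian)
    (hnorm : x ⬝ᵥ x - y ⬝ᵥ y = 1) (hω : ω ≠ 0)
    (h1 : A *ᵥ x + B *ᵥ y = ω • x)
    (h2 : B *ᵥ x + A *ᵥ y = -(ω • y))
    (hAB : (A - B).PosDef)
    (S₂ : Matrix (Fin d) (Fin d) ℝ) (hS₂ : S₂.PosDef) (hsqrt : S₂ * S₂ = A - B) :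
    (S₂⁻¹ *ᵥ (x + y)) ⬝ᵥ (S₂⁻¹ *ᵥ (x + y)) = ω⁻¹ ∧
      (ω * ((S₂⁻¹ *ᵥ (x + y)) ⬝ᵥ (S₂⁻¹ *ᵥ (x + y)))) ^ (-(1 : ℝ) / 2) = 1 := by
  have hSu : IsUnit S₂.det := isUnit_iff_ne_zero.mpr hS₂.det_pos.ne'
  have key : (A - B) *ᵥ (x - y) = ω • (x + y) := by
    have h3 : A *ᵥ x + B *ᵥ y - (B *ᵥ x + A *ᵥ y) = ω • x + ω • y := by
      rw [h1, h2]; abel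
    rw [sub_mulVec, mulVec_sub, mulVec_sub, smul_add, ← h3]; abel
  have hinv : (A - B)⁻¹ *ᵥ (x + y) = ω⁻¹ • (x - y) := by
    have : (A - B)⁻¹ *ᵥ ((A - B) *ᵥ (x - y)) = (A - B)⁻¹ *ᵥ (ω • (x + y)) := by
      rw [key]
    rw [mulVec_mulVec, nonsing_inv_mul _ (isUnit_iff_ne_zero.mpr hAB.det_pos.ne'),
      one_mulVec, mulVec_smul] at this
    rw [this, smul_smul, inv_mul_cancel₀ hω, one_smul]
  have hsymm : S₂⁻¹ᵀ = S₂⁻¹ := by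
    have := hS₂.isHermitian.inv
    simpa [Matrix.IsHermitian, conjTranspose_eq_transpose_of_trivial] using this
  have hmain : (S₂⁻¹ *ᵥ (x + y)) ⬝ᵥ (S₂⁻¹ *ᵥ (x + y)) = ω⁻¹ := by
    have h4 : S₂⁻¹ *ᵥ (S₂⁻¹ *ᵥ (x + y)) = ω⁻¹ • (x - y) := by
      rw [mulVec_mulVec, ← Matrix.mul_inv_rev, hsqrt, hinv]
    calc (S₂⁻¹ *ᵥ (x + y)) ⬝ᵥ (S₂⁻¹ *ᵥ (x + y))
        = ((S₂⁻¹ *ᵥ (x + y)) ᵥ* S₂⁻¹) ⬝ᵥ (x + y) := by rw [dotProduct_mulVec]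
      _ = (S₂⁻¹ *ᵥ (S₂⁻¹ *ᵥ (x + y))) ⬝ᵥ (x + y) := by
            have hvm : ∀ u : Fin d → ℝ, u ᵥ* S₂⁻¹ = S₂⁻¹ *ᵥ u := by
              intro u
              rw [← hsymm, vecMul_transpose, hsymm]
            rw [hvm]
      _ = (ω⁻¹ • (x - y)) ⬝ᵥ (x + y) := by rw [h4]
      _ = ω⁻¹ := by
            rw [smul_dotProduct]
            have : (x - y) ⬝ᵥ (x + y) = 1 := by
              rw [sub_dotProduct, dotProduct_add, dotProduct_add,
                dotProduct_comm y x] at *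
              linarith [hnorm]
            rw [this, smul_eq_mul, mul_one]
    done
  refine ⟨hmain, ?_⟩
  rw [hmain, mul_inv_cancel₀ hω, Real.one_rpow]
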